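/- Let M be a matroid with two distinct triangles {t, x_i, y_i} and {t, x_j, y_j} sharing only the element t, and suppose {t*, x_i, y_i} and {t*, x_j, y_j} are triads of M for some element t* not in either triangle. Then circuit elimination applied to the two triangles, together with orthogonality with the two triads, implies that {x_i, y_i, x_j, y_j} is a circuit of M. -/

import Mathlib

open Matroid Set

namespace SpikePaper

variable {α : Type*}

/-- `C` is a circuit of the matroid `M`: a minimal dependent set. -/
def Circ (M : Matroid α) (C : Set α) : Prop :=
  M.Dep C ∧ ∀ ⦃D⦄, M.Dep D → D ⊆ C → D = C

/-- A cocircuit of `M` is a circuit of the dual matroid. -/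
def Cocirc (M : Matroid α) (C : Set α) : Prop := Circ M✶ C

/-- A triangle is a 3-element circuit. -/
def Triangle (M : Matroid α) (T : Set α) : Prop := Circ M T ∧ T.encard = 3

/-- A triad is a 3-element cocircuit. -/
def Triad (M : Matroid α) (T : Set α) : Prop := Cocirc M T ∧ T.encard = 3

/-- The rank of the set `X` in `M` equals `n`. -/
def RkEq (M : Matroid α) (X : Set α) (n : ℕ) : Prop :=
  ∃ I, M.IsBasis I X ∧ I.ncard = n

/-- The rank of `M` equals `n`. -/
def RankEq (M : Matroid α) (n : ℕ) : Prop := RkEq M M.E n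

/-- Deletion of the set `D` from `M`. -/
def del (M : Matroid α) (D : Set α) : Matroid α := M ↾ (M.E \ D)

/-- Contraction of the set `C` in `M`. -/
def con (M : Matroid α) (C : Set α) : Matroid α := (del M✶ C)✶

/-- The rank of `X` in `M`, as an extended natural number. -/
noncomputable def er (M : Matroid α) (X : Set α) : ℕ∞ :=
  ⨆ I ∈ {I | M.Indep I ∧ I ⊆ X}, I.encard

/-- `M` is 3-connected: it has no `k`-separation for `k ∈ {1, 2}`. -/
def ThreeConnected (M : Matroid α) : Prop :=
  ∀ k : ℕ, 1 ≤ k → k ≤ 2 → ∀ X Y : Set α, X ∪ Y = M.E → Disjoint X Y →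
    er M X + er M Y + 1 ≤ er M M.E + (k : ℕ∞) →
    X.encard < (k : ℕ∞) ∨ Y.encard < (k : ℕ∞)

/-- `M` is simple: every subset of the ground set with at most two elements is independent. -/
def Simple (M : Matroid α) : Prop := ∀ X ⊆ M.E, X.encard ≤ 2 → M.Indep X

/-- The labels `t, x 0, y 0, ..., x (r-1), y (r-1)` are pairwise distinct. -/
def SpikeLabels {r : ℕ} (t : α) (x y : Fin r → α) : Prop :=
  Function.Injective x ∧ Function.Injective y ∧
  (∀ i j, x i ≠ y j) ∧ (∀ i, t ≠ x i) ∧ (∀ i, t ≠ y i)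

/-- `M` is a rank-`r` tipped spike with tip `t` and legs `{x i, y i}`. -/
def IsTippedSpike (M : Matroid α) (r : ℕ) (t : α) (x y : Fin r → α) : Prop :=
  3 ≤ r ∧ SpikeLabels t x y ∧
  M.E = insert t (⋃ i, {x i, y i}) ∧
  RankEq M r ∧
  (∀ i, Circ M {t, x i, y i}) ∧
  ∀ J : Set (Fin r), J.Nonempty → J ≠ Set.univ →
    RkEq M (⋃ i ∈ J, {x i, y i}) (J.ncard + 1)

/-- `X` is a `U_{2,n}`-restriction (an `n`-point line) of `M`. -/
def LineRestriction (M : Matroid α) (X : Set α) (n : ℕ) : Prop :=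
  X ⊆ M.E ∧ X.ncard = n ∧ RkEq M X 2 ∧
  ∀ p ⊆ X, p.encard = 2 → M.Indep p

/-- `X` is a `U_{3,5}`-restriction of `M`. -/
def U35Restriction (M : Matroid α) (X : Set α) : Prop :=
  X ⊆ M.E ∧ X.ncard = 5 ∧ RkEq M X 3 ∧
  ∀ S ⊆ X, S.encard ≤ 3 → M.Indep S

/-- `{u, v}` is contained in three distinct 4-element circuits of `M`. -/
def ThreeFourCircs (M : Matroid α) (u v : α) : Prop :=
  ∃ C1 C2 C3 : Set α, Circ M C1 ∧ Circ M C2 ∧ Circ M C3 ∧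
    C1.encard = 4 ∧ C2.encard = 4 ∧ C3.encard = 4 ∧
    C1 ≠ C2 ∧ C1 ≠ C3 ∧ C2 ≠ C3 ∧
    {u, v} ⊆ C1 ∧ {u, v} ⊆ C2 ∧ {u, v} ⊆ C3

lemma circ_diff_indep {M : Matroid α} {C : Set α} (h : Circ M C) {x : α} (hx : x ∈ C) :
    M.Indep (C \ {x}) := by
  by_contra hi
  have hd : M.Dep (C \ {x}) := ⟨hi, diff_subset.trans h.1.subset_ground⟩
  have heq := h.2 hd diff_subset
  have : x ∈ C \ {x} := by rw [heq]; exact hx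
  simp at this

lemma mem_closure_of_circ {M : Matroid α} {C : Set α} (h : Circ M C) {x : α} (hx : x ∈ C) :
    x ∈ M.closure (C \ {x}) := by
  have hi := circ_diff_indep h hx
  have hd : M.Dep (insert x (C \ {x})) := by
    rw [insert_diff_singleton, insert_eq_of_mem hx]
    exact h.1
  exact ((hi.insert_dep_iff).1 hd).1

lemma circ_nonempty {M : Matroid α} {C : Set α} (h : Circ M C) : C.Nonempty := by
  rcases C.eq_empty_or_nonempty with rfl | hne
  · exact absurd M.empty_indep h.1.not_indep
  · exact hne

lemma exists_circ_of_dep_aux {M : Matroid α} :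
    ∀ n : ℕ, ∀ D : Set α, D.Finite → D.ncard ≤ n → M.Dep D → ∃ C, C ⊆ D ∧ Circ M C := by
  intro n
  induction n with
  | zero =>
    intro D hfin hcard hdep
    have : D = ∅ := by
      rw [← Set.ncard_eq_zero hfin]; omega
    subst this
    exact absurd M.empty_indep hdep.not_indep
  | succ n ih =>
    intro D hfin hcard hdep
    by_cases h : ∀ ⦃D'⦄, M.Dep D' → D' ⊆ D → D' = D
    · exact ⟨D, subset_rfl, hdep, h⟩
    · push_neg at h
      obtain ⟨D', hD'dep, hD'sub, hne⟩ := h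
      have hss : D' ⊂ D := hD'sub.ssubset_of_ne hne
      have hlt : D'.ncard < D.ncard := Set.ncard_lt_ncard hss hfin
      obtain ⟨C, hCsub, hC⟩ := ih D' (hfin.subset hD'sub) (by omega) hD'dep
      exact ⟨C, hCsub.trans hD'sub, hC⟩

lemma exists_circ_of_dep {M : Matroid α} {D : Set α} (hfin : D.Finite) (hdep : M.Dep D) :
    ∃ C, C ⊆ D ∧ Circ M C :=
  exists_circ_of_dep_aux D.ncard D hfin le_rfl hdep

/-- Orthogonality: a circuit and a cocircuit cannot meet in exactly one element. -/
lemma orth {M : Matroid α} {C K : Set α} (hC : Circ M C) (hK : Circ M✶ K) {e : α}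
    (h : C ∩ K = {e}) : False := by
  have heCK : e ∈ C ∩ K := h ▸ rfl
  have heC : e ∈ C := heCK.1
  have heK : e ∈ K := heCK.2
  have heE : e ∈ M.E := hC.1.subset_ground heC
  have h1 : e ∈ M.closure (C \ {e}) := mem_closure_of_circ hC heC
  have hsub : C \ {e} ⊆ M.E \ K := by
    rintro a ⟨haC, hae⟩
    refine ⟨hC.1.subset_ground haC, fun haK => hae ?_⟩
    have : a ∈ C ∩ K := ⟨haC, haK⟩
    rw [h] at this; exact this
  have h2 : e ∈ M.closure (M.E \ K) := M.closure_subset_closure hsub h1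
  -- K \ {e} is coindependent, so M.E \ (K \ {e}) spans
  have hco : M.Coindep (K \ {e}) := circ_diff_indep hK heK
  have hsp : M.closure (M.E \ (K \ {e})) = M.E := hco.closure_compl
  have hKE : K ⊆ M.E := hK.1.subset_ground
  have hEe : M.E \ (K \ {e}) = insert e (M.E \ K) := by
    ext a
    simp only [Set.mem_diff, Set.mem_singleton_iff, Set.mem_insert_iff, not_and, not_not]
    constructor
    · rintro ⟨haE, hk⟩
      by_cases haK : a ∈ K
      · exact Or.inl (hk haK)
      · exact Or.inr ⟨haE, haK⟩
    · rintro (rfl | ⟨haE, haK⟩)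
      · exact ⟨heE, fun _ => rfl⟩
      · exact ⟨haE, fun hk => absurd hk haK⟩
  have hsub2 : insert e (M.E \ K) ⊆ M.closure (M.E \ K) := by
    rw [Set.insert_subset_iff]
    exact ⟨h2, M.subset_closure _ diff_subset⟩
  have : M.E ⊆ M.closure (M.E \ K) := by
    calc M.E = M.closure (insert e (M.E \ K)) := by rw [← hEe, hsp]
    _ ⊆ M.closure (M.closure (M.E \ K)) := M.closure_subset_closure hsub2
    _ = M.closure (M.E \ K) := M.closure_closure _
  have hcoK : M.Coindep K := by
    rw [coindep_iff_closure_compl_eq_ground]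
    exact subset_antisymm (M.closure_subset_ground _) this
  exact hK.1.not_indep hcoK

/-- two triangles through `t` and two triads through `t*` on the same pairs
force `{x_i, y_i, x_j, y_j}` to be a circuit. -/
theorem stmt1 {α : Type*} (M : Matroid α) (t tstar xi yi xj yj : α)
    (hdist : [t, tstar, xi, yi, xj, yj].Pairwise (· ≠ ·))
    (hE : ({t, tstar, xi, yi, xj, yj} : Set α) ⊆ M.E)
    (h1 : Triangle M {t, xi, yi}) (h2 : Triangle M {t, xj, yj})
    (h3 : Triad M {tstar, xi, yi}) (h4 : Triad M {tstar, xj, yj}) :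
    Circ M {xi, yi, xj, yj} := by
  simp only [List.pairwise_cons] at hdist
  obtain ⟨h0, hs, hi0, hj0, hk0, -⟩ := hdist
  have htxi : t ≠ xi := h0 _ (by simp)
  have htyi : t ≠ yi := h0 _ (by simp)
  have htxj : t ≠ xj := h0 _ (by simp)
  have htyj : t ≠ yj := h0 _ (by simp)
  have hsxi : tstar ≠ xi := hs _ (by simp)
  have hsyi : tstar ≠ yi := hs _ (by simp)
  have hsxj : tstar ≠ xj := hs _ (by simp)
  have hsyj : tstar ≠ yj := hs _ (by simp)
  have hxiyi : xi ≠ yi := hi0 _ (by simp)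
  have hxixj : xi ≠ xj := hi0 _ (by simp)
  have hxiyj : xi ≠ yj := hi0 _ (by simp)
  have hyixj : yi ≠ xj := hj0 _ (by simp)
  have hyiyj : yi ≠ yj := hj0 _ (by simp)
  have hxjyj : xj ≠ yj := hk0 _ (by simp)
  have hC1 : Circ M {t, xi, yi} := h1.1
  have hC2 : Circ M {t, xj, yj} := h2.1
  have hK1 : Circ M✶ {tstar, xi, yi} := h3.1
  have hK2 : Circ M✶ {tstar, xj, yj} := h4.1
  have hxiE : xi ∈ M.E := hE (by simp)
  have hyiE : yi ∈ M.E := hE (by simp)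
  have hxjE : xj ∈ M.E := hE (by simp)
  have hyjE : yj ∈ M.E := hE (by simp)
  -- independence of the pairs
  have hd1 : ({t, xi, yi} : Set α) \ {t} = {xi, yi} := by
    ext a
    constructor
    · rintro ⟨(rfl | rfl | rfl), hne⟩
      · exact absurd (mem_singleton _) hne
      · exact Or.inl rfl
      · exact Or.inr rfl
    · rintro (rfl | rfl)
      · exact ⟨Or.inr (Or.inl rfl), by simpa using Ne.symm htxi⟩
      · exact ⟨Or.inr (Or.inr rfl), by simpa using Ne.symm htyi⟩
  have hd2 : ({t, xj, yj} : Set α) \ {t} = {xj, yj} := by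
    ext a
    constructor
    · rintro ⟨(rfl | rfl | rfl), hne⟩
      · exact absurd (mem_singleton _) hne
      · exact Or.inl rfl
      · exact Or.inr rfl
    · rintro (rfl | rfl)
      · exact ⟨Or.inr (Or.inl rfl), by simpa using Ne.symm htxj⟩
      · exact ⟨Or.inr (Or.inr rfl), by simpa using Ne.symm htyj⟩
  have hIi : M.Indep {xi, yi} := by
    have := circ_diff_indep hC1 (show t ∈ ({t, xi, yi} : Set α) by simp)
    rwa [hd1] at this
  have hIj : M.Indep {xj, yj} := by
    have := circ_diff_indep hC2 (show t ∈ ({t, xj, yj} : Set α) by simp)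
    rwa [hd2] at this
  -- t is in the closure of {xi, yi}
  have ht1 : t ∈ M.closure {xi, yi} := by
    have := mem_closure_of_circ hC1 (show t ∈ ({t, xi, yi} : Set α) by simp)
    rwa [hd1] at this
  -- yj is in the closure of {t, xj}
  have hyj1 : yj ∈ M.closure {t, xj} := by
    have := mem_closure_of_circ hC2 (show yj ∈ ({t, xj, yj} : Set α) by simp)
    have hdd : ({t, xj, yj} : Set α) \ {yj} = {t, xj} := by
      ext a
      constructor
      · rintro ⟨(rfl | rfl | rfl), hne⟩
        · exact Or.inl rfl
        · exact Or.inr rfl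
        · exact absurd (mem_singleton _) hne
      · rintro (rfl | rfl)
        · exact ⟨Or.inl rfl, by simpa using htyj⟩
        · exact ⟨Or.inr (Or.inl rfl), by simpa using hxjyj⟩
    rwa [hdd] at this
  -- hence yj ∈ closure {xi, yi, xj}
  have hyj2 : yj ∈ M.closure {xi, yi, xj} := by
    have hsub : ({t, xj} : Set α) ⊆ M.closure {xi, yi, xj} := by
      rintro a (rfl | rfl)
      · refine M.closure_subset_closure ?_ ht1
        rintro a (rfl | rfl)
        · exact Or.inl rfl
        · exact Or.inr (Or.inl rfl)
      · exact M.mem_closure_of_mem (by simp) (by rintro a (rfl | rfl | rfl) <;> assumption)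
    have := M.closure_subset_closure_of_subset_closure hsub
    exact this hyj1
  -- D := {xi, yi, xj, yj} is dependent
  set D : Set α := {xi, yi, xj, yj} with hD
  have hDE : D ⊆ M.E := by
    intro a ha
    rcases ha with rfl | rfl | rfl | rfl <;> assumption
  have hDins : D = insert yj {xi, yi, xj} := by
    ext a; simp [hD]; tauto
  have hDdep : M.Dep D := by
    refine ⟨fun hind => ?_, hDE⟩
    have hIxxx : M.Indep {xi, yi, xj} := hind.subset (by rw [hDins]; exact subset_insert _ _)
    have hnm : yj ∉ ({xi, yi, xj} : Set α) := by
      simp; exact ⟨(Ne.symm hxiyj), fun h => (hyiyj h.symm), Ne.symm hxjyj⟩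
    rw [hDins] at hind
    have := (hIxxx.insert_indep_iff_of_notMem hnm).1 hind
    exact this.2 hyj2
  -- extract a circuit C ⊆ D
  obtain ⟨C, hCD, hC⟩ := exists_circ_of_dep (Set.toFinite D) hDdep
  have hCne : C.Nonempty := circ_nonempty hC
  have htsC : tstar ∉ C := by
    intro h
    rcases hCD h with rfl | rfl | rfl | rfl
    · exact hsxi rfl
    · exact hsyi rfl
    · exact hsxj rfl
    · exact hsyj rfl
  -- orthogonality: C contains both or neither element of each pair
  have hpi : xi ∈ C ↔ yi ∈ C := by
    constructor
    · intro hx; by_contra hy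
      refine orth hC hK1 (e := xi) ?_
      ext a
      simp only [Set.mem_inter_iff, Set.mem_insert_iff, Set.mem_singleton_iff]
      constructor
      · rintro ⟨haC, rfl | rfl | rfl⟩
        · exact absurd haC htsC
        · rfl
        · exact absurd haC hy
      · rintro rfl; exact ⟨hx, by tauto⟩
    · intro hy; by_contra hx
      refine orth hC hK1 (e := yi) ?_
      ext a
      simp only [Set.mem_inter_iff, Set.mem_insert_iff, Set.mem_singleton_iff]
      constructor
      · rintro ⟨haC, rfl | rfl | rfl⟩
        · exact absurd haC htsC
        · exact absurd haC hx
        · rfl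
      · rintro rfl; exact ⟨hy, by tauto⟩
  have hpj : xj ∈ C ↔ yj ∈ C := by
    constructor
    · intro hx; by_contra hy
      refine orth hC hK2 (e := xj) ?_
      ext a
      simp only [Set.mem_inter_iff, Set.mem_insert_iff, Set.mem_singleton_iff]
      constructor
      · rintro ⟨haC, rfl | rfl | rfl⟩
        · exact absurd haC htsC
        · rfl
        · exact absurd haC hy
      · rintro rfl; exact ⟨hx, by tauto⟩
    · intro hy; by_contra hx
      refine orth hC hK2 (e := yj) ?_
      ext a
      simp only [Set.mem_inter_iff, Set.mem_insert_iff, Set.mem_singleton_iff]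
      constructor
      · rintro ⟨haC, rfl | rfl | rfl⟩
        · exact absurd haC htsC
        · exact absurd haC hx
        · rfl
      · rintro rfl; exact ⟨hy, by tauto⟩
  -- C cannot be contained in a single (independent) pair
  have hnotsubi : ¬ C ⊆ ({xi, yi} : Set α) := fun hsub =>
    hC.1.not_indep (hIi.subset hsub)
  have hnotsubj : ¬ C ⊆ ({xj, yj} : Set α) := fun hsub =>
    hC.1.not_indep (hIj.subset hsub)
  -- hence C contains an element of each pair, so C = D
  have hxiC : xi ∈ C := by
    by_contra hx
    have hy : yi ∉ C := fun h => hx (hpi.2 h)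
    exact hnotsubj fun a haC => by
      rcases hCD haC with rfl | rfl | rfl | rfl
      · exact absurd haC hx
      · exact absurd haC hy
      · simp
      · simp
  have hxjC : xj ∈ C := by
    by_contra hx
    have hy : yj ∉ C := fun h => hx (hpj.2 h)
    exact hnotsubi fun a haC => by
      rcases hCD haC with rfl | rfl | rfl | rfl
      · simp
      · simp
      · exact absurd haC hx
      · exact absurd haC hy
  have hCeq : C = D := by
    apply subset_antisymm hCD
    rintro a (rfl | rfl | rfl | rfl)
    · exact hxiC
    · exact hpi.1 hxiC
    · exact hxjC
    · exact hpj.1 hxjC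
  rw [← hCeq]
  exact hC

end SpikePaper
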